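/- Fix a positive integer m and let B = (b_1, ..., b_n) be a Ferrers board, regarded as sitting inside the board with n levels (rows 1 through mn). For 1 ≤ j ≤ n let l_j be the number of cells of B in the j-th level from the top, i.e. in level n + 1 - j. Then for every real number x, p_m(B, x) = Π_{j=1}^{n} (x + l_j - m(j - 1)). -/

import Mathlib

open scoped Classical

/-- The falling factorial `x↓ₖ = ∏_{i=0}^{k-1} (x - i)`. -/
noncomputable def ffall (x : ℝ) (k : ℕ) : ℝ := ∏ i ∈ Finset.range k, (x - i)

/-- The `m`-falling factorial `x↓_{k,m} = ∏_{i=0}^{k-1} (x - m·i)`. -/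
noncomputable def mfall (x : ℝ) (m k : ℕ) : ℝ := ∏ i ∈ Finset.range k, (x - m * i)

/-- The predicate that `b 0 ≤ b 1 ≤ ... ≤ b (n-1)`, i.e. the column heights of a
Ferrers board with `n` columns are weakly increasing.  (Column `i`, for `0 ≤ i < n`,
corresponds to column `i+1` = `b_{i+1}` of the paper.) -/
def FerrersMono (n : ℕ) (b : ℕ → ℕ) : Prop := ∀ i, i + 1 < n → b i ≤ b (i + 1)

/-- The cells of the Ferrers board with column heights `b 0, …, b (n-1)`:
pairs `(i, j)` with `i < n` (a column, 0-indexed) and `1 ≤ j ≤ b i` (a row, 1-indexed). -/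
def cellFinset (n : ℕ) (b : ℕ → ℕ) : Finset (ℕ × ℕ) :=
  (Finset.range n ×ˢ Finset.Icc 1 ((Finset.range n).sup b)).filter fun p => p.2 ≤ b p.1

/-- The file placements of `k` rooks on the board: `k` cells, no two in the same column. -/
def filePlacements (n : ℕ) (b : ℕ → ℕ) (k : ℕ) : Finset (Finset (ℕ × ℕ)) :=
  (cellFinset n b).powerset.filter fun P =>
    P.card = k ∧ ∀ p ∈ P, ∀ q ∈ P, p ≠ q → p.1 ≠ q.1

/-- The `k`-th rook number `r_k(B)`: the number of placements of `k` cells of the board,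
no two in the same row or column. -/
def rookNum (n : ℕ) (b : ℕ → ℕ) (k : ℕ) : ℕ :=
  ((cellFinset n b).powerset.filter fun P =>
    P.card = k ∧ ∀ p ∈ P, ∀ q ∈ P, p ≠ q → p.1 ≠ q.1 ∧ p.2 ≠ q.2).card

/-- The (0-indexed) level of the (1-indexed) row `j`: level `t` (0-indexed) consists of
rows `t*m + 1, …, t*m + m`. -/
def levelOf (m j : ℕ) : ℕ := (j - 1) / m

/-- The `k`-th `m`-level rook number `r_{k,m}(B)`: the number of placements of `k` cells
of the board, no two in the same column or in the same level. -/
def mLevelRookNum (m n : ℕ) (b : ℕ → ℕ) (k : ℕ) : ℕ :=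
  ((cellFinset n b).powerset.filter fun P =>
    P.card = k ∧ ∀ p ∈ P, ∀ q ∈ P, p ≠ q →
      p.1 ≠ q.1 ∧ levelOf m p.2 ≠ levelOf m q.2).card

/-- A placement has no two cells in the same level. -/
def NoLevelRepeat (m : ℕ) (F : Finset (ℕ × ℕ)) : Prop :=
  ∀ p ∈ F, ∀ q ∈ F, p ≠ q → levelOf m p.2 ≠ levelOf m q.2

/-- The `m`-weight of a file placement `F`: the product over all rows `j` of
`1↓_{f_j, m}` where `f_j` is the number of cells of `F` in row `j`.  (Rows containing
no cell of `F` contribute `1↓_{0,m} = 1`, so it suffices to take the product over the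
rows meeting `F`.) -/
noncomputable def wtm (m : ℕ) (F : Finset (ℕ × ℕ)) : ℝ :=
  ∏ j ∈ F.image Prod.snd, mfall 1 m ((F.filter fun p => p.2 = j).card)

/-- The `k`-th `m`-weighted file placement number `f_{k,m}(B)`. -/
noncomputable def fWeightNum (m n : ℕ) (b : ℕ → ℕ) (k : ℕ) : ℝ :=
  ∑ F ∈ filePlacements n b k, wtm m F

/-- The `m`-floor of `b`: the largest multiple of `m` that is at most `b`. -/
def mfloor (m b : ℕ) : ℕ := m * (b / m)

/-- A singleton board (w.r.t. `m`): a Ferrers board such that whenever column `i` has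
nonzero remainder mod `m`, the `m`-floor strictly increases at the next column. -/
def IsSingletonBoard (m n : ℕ) (b : ℕ → ℕ) : Prop :=
  FerrersMono n b ∧ ∀ i, i + 1 < n → b i - mfloor m (b i) ≠ 0 →
    mfloor m (b i) < mfloor m (b (i + 1))

/-- The cells of `F` lying in level `l` (0-indexed). -/
def rooksInLevel (m : ℕ) (F : Finset (ℕ × ℕ)) (l : ℕ) : Finset (ℕ × ℕ) :=
  F.filter fun p => levelOf m p.2 = l

/-- `l` is the distinguished level of `F`: it contains at least two cells of `F`,
it has the fewest cells among all levels containing at least two cells of `F`,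
and it is the lowest such level (any lower level with at least two cells of `F`
contains strictly more of them). -/
def DistinguishedLevel (m : ℕ) (F : Finset (ℕ × ℕ)) (l : ℕ) : Prop :=
  2 ≤ (rooksInLevel m F l).card ∧
  (∀ l', 2 ≤ (rooksInLevel m F l').card →
    (rooksInLevel m F l).card ≤ (rooksInLevel m F l').card) ∧
  (∀ l' < l, 2 ≤ (rooksInLevel m F l').card →
    (rooksInLevel m F l).card < (rooksInLevel m F l').card)

/-- The class `𝓟(F₀)` of a file placement `F₀` with distinguished level `l`:
all file placements on the board with the same number of rooks as `F₀` which agree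
with `F₀` outside level `l`, whose rooks in level `l` occupy the same columns as those
of `F₀`, and whose leftmost rook in level `l` occupies the same cell as the leftmost
rook of `F₀` in level `l`. -/
def classOf (m n : ℕ) (b : ℕ → ℕ) (l : ℕ) (F₀ : Finset (ℕ × ℕ)) :
    Finset (Finset (ℕ × ℕ)) :=
  (filePlacements n b F₀.card).filter fun F =>
    (F.filter fun p => levelOf m p.2 ≠ l) = (F₀.filter fun p => levelOf m p.2 ≠ l) ∧
    (rooksInLevel m F l).image Prod.fst = (rooksInLevel m F₀ l).image Prod.fst ∧
    ∀ p ∈ rooksInLevel m F l, (∀ q ∈ rooksInLevel m F l, p.1 ≤ q.1) → p ∈ F₀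

/-- The `j`-th level number (for `1 ≤ j ≤ n`) of the board: the number of its cells in
the `j`-th level from the top, i.e. in the (1-indexed) level `n + 1 - j`, which is the
0-indexed level `n - j`. -/
def levelNum (m n : ℕ) (b : ℕ → ℕ) (j : ℕ) : ℕ :=
  ((cellFinset n b).filter fun p => levelOf m p.2 = n - j).card

namespace S3Aux
open Finset

lemma mem_cellFinset {n : ℕ} {b : ℕ → ℕ} {p : ℕ × ℕ} :
    p ∈ cellFinset n b ↔ p.1 < n ∧ 1 ≤ p.2 ∧ p.2 ≤ b p.1 := by
  unfold cellFinset
  simp only [Finset.mem_filter, Finset.mem_product, Finset.mem_range, Finset.mem_Icc]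
  constructor
  · rintro ⟨⟨h1, h2, _⟩, h4⟩; exact ⟨h1, h2, h4⟩
  · rintro ⟨h1, h2, h3⟩
    exact ⟨⟨h1, h2, h3.trans (Finset.le_sup (Finset.mem_range.2 h1))⟩, h3⟩

lemma levelOf_eq_iff {m y t : ℕ} (hm : 0 < m) (hy : 1 ≤ y) :
    levelOf m y = t ↔ m * t + 1 ≤ y ∧ y ≤ m * t + m := by
  unfold levelOf
  constructor
  · rintro rfl
    have h1 := Nat.mul_div_le (y - 1) m
    have h2 := Nat.lt_mul_div_succ (y - 1) hm
    rw [Nat.mul_succ] at h2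
    omega
  · rintro ⟨h1, h2⟩
    exact Nat.div_eq_of_lt_le (by rw [mul_comm]; omega)
      (by rw [add_mul, one_mul, mul_comm]; omega)

lemma levelOf_lt_of_le {m y t : ℕ} (hm : 0 < m) (hy : 1 ≤ y) (h : y ≤ m * t) :
    levelOf m y < t := by
  unfold levelOf
  rw [Nat.div_lt_iff_lt_mul hm, mul_comm]
  omega

lemma levelOf_mono {m y z : ℕ} (h : y ≤ z) : levelOf m y ≤ levelOf m z :=
  Nat.div_le_div_right (by omega)

lemma le_of_levelOf_ne {m y t : ℕ} (hm : 0 < m) (hy : 1 ≤ y) (hle : y ≤ m * t + m)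
    (h : levelOf m y ≠ t) : y ≤ m * t := by
  by_contra hc
  exact h ((levelOf_eq_iff hm hy).2 ⟨by omega, hle⟩)

lemma ferrers_mono {n : ℕ} {b : ℕ → ℕ} (hb : FerrersMono n b) {i j : ℕ}
    (hij : i ≤ j) (hj : j < n) : b i ≤ b j := by
  induction j, hij using Nat.le_induction with
  | base => exact le_rfl
  | succ j hj' ih => exact (ih (by omega)).trans (hb j (by omega))

noncomputable def mpl (m n : ℕ) (b : ℕ → ℕ) (k : ℕ) : Finset (Finset (ℕ × ℕ)) :=
  (cellFinset n b).powerset.filter fun P =>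
    P.card = k ∧ ∀ p ∈ P, ∀ q ∈ P, p ≠ q →
      p.1 ≠ q.1 ∧ levelOf m p.2 ≠ levelOf m q.2

lemma rook_eq_card {m n k : ℕ} {b : ℕ → ℕ} :
    mLevelRookNum m n b k = (mpl m n b k).card := rfl

lemma mem_mpl {m n k : ℕ} {b : ℕ → ℕ} {P : Finset (ℕ × ℕ)} :
    P ∈ mpl m n b k ↔ P ⊆ cellFinset n b ∧ P.card = k ∧
      ∀ p ∈ P, ∀ q ∈ P, p ≠ q → p.1 ≠ q.1 ∧ levelOf m p.2 ≠ levelOf m q.2 := by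
  simp [mpl, and_assoc]

lemma prod_Icc_one (n : ℕ) (f : ℕ → ℝ) :
    ∏ j ∈ Finset.Icc 1 n, f j = ∏ i ∈ Finset.range n, f (i + 1) := by
  rw [Finset.range_eq_Ico, ← Finset.Ico_add_one_right_eq_Icc 1 n, ← Finset.map_add_right_Ico 0 n 1,
    Finset.prod_map]
  rfl

lemma key (m : ℕ) (hm : 0 < m) :
    ∀ C n (b : ℕ → ℕ), (∑ i ∈ Finset.range n, b i) = C → FerrersMono n b →
      (∀ i, i < n → b i ≤ m * n) → ∀ x : ℝ,
      ∑ k ∈ Finset.range (n + 1), (mLevelRookNum m n b k : ℝ) * mfall x m (n - k) =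
        ∏ j ∈ Finset.Icc 1 n, (x + (levelNum m n b j : ℝ) - (m : ℝ) * ((j : ℝ) - 1)) := by
  intro C
  induction C using Nat.strong_induction_on with
  | _ C IH =>
  intro n b hC hb hbd x
  by_cases hzero : ∀ i < n, b i = 0
  · -- base case : the board has no cells
    have hcell : cellFinset n b = ∅ := by
      ext p
      simp only [mem_cellFinset, Finset.notMem_empty, iff_false, not_and]
      intro h1 h2
      have := hzero p.1 h1
      omega
    have hr0 : mLevelRookNum m n b 0 = 1 := by
      rw [rook_eq_card]
      have h1 : mpl m n b 0 = {(∅ : Finset (ℕ × ℕ))} := by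
        ext P
        simp only [mem_mpl, hcell, Finset.subset_empty, Finset.mem_singleton]
        constructor
        · rintro ⟨rfl, _, _⟩; rfl
        · rintro rfl; simp
      rw [h1]; simp
    have hrk : ∀ k, k ≠ 0 → mLevelRookNum m n b k = 0 := by
      intro k hk
      rw [rook_eq_card, Finset.card_eq_zero, Finset.eq_empty_iff_forall_notMem]
      intro P hP
      rw [mem_mpl, hcell, Finset.subset_empty] at hP
      obtain ⟨rfl, hcard, -⟩ := hP
      rw [Finset.card_empty] at hcard
      exact hk hcard.symm
    have hlev : ∀ j, levelNum m n b j = 0 := by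
      intro j; simp [levelNum, hcell]
    rw [Finset.sum_eq_single 0]
    · rw [hr0, prod_Icc_one]
      simp only [hlev]
      rw [Nat.cast_one, one_mul, Nat.sub_zero]
      unfold mfall
      apply Finset.prod_congr rfl
      intro i _
      push_cast
      ring
    · intro k _ hk0
      rw [hrk k hk0]; simp
    · intro h; exact absurd (Finset.mem_range.2 (by omega)) h
  · -- inductive step
    push_neg at hzero
    obtain ⟨iw, hiwn, hiw⟩ := hzero
    have hn : 0 < n := by omega
    set c := b (n - 1) with hcdef
    have hc1 : 1 ≤ c := le_trans (by omega) (ferrers_mono hb (show iw ≤ n - 1 by omega) (by omega))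
    have hcmn : c ≤ m * n := hbd (n - 1) (by omega)
    have hex : ∃ i, c ≤ b i := ⟨n - 1, le_rfl⟩
    set i1 := Nat.find hex with hi1def
    have hi1c : c ≤ b i1 := Nat.find_spec hex
    have hi1n : i1 ≤ n - 1 := Nat.find_min' hex le_rfl
    have hi1lt : i1 < n := by omega
    have hltc : ∀ i, i < i1 → b i < c := fun i h => lt_of_not_ge (Nat.find_min hex h)
    have hble : ∀ i, i < n → b i ≤ c := fun i h => ferrers_mono hb (by omega) (by omega)
    have hbi1 : b i1 = c := le_antisymm (hble i1 hi1lt) hi1c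
    set t0 := levelOf m c with ht0def
    have ht0 : m * t0 + 1 ≤ c ∧ c ≤ m * t0 + m := (levelOf_eq_iff hm hc1).1 ht0def.symm
    have ht0n : t0 < n := by
      have h1 : m * t0 < m * n := by omega
      exact Nat.lt_of_mul_lt_mul_left h1
    set j0 := n - t0 with hj0def
    have hj01 : 1 ≤ j0 := by omega
    have hj0n : j0 ≤ n := by omega
    set p0 : ℕ × ℕ := (i1, c) with hp0def
    set b' := Function.update b i1 (c - 1) with hb'def
    set uc : ℕ → ℕ := fun i => if i < i1 then i else i + 1 with hucdef
    set ec : ℕ → ℕ := fun i => if i < i1 then i else i - 1 with hecdef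
    set b'' := fun i => min (b (uc i)) (m * t0) with hb''def
    have huc_ne : ∀ i, uc i ≠ i1 := by
      intro i; rw [hucdef]; dsimp only; split_ifs <;> omega
    have huc_inj : ∀ i j, uc i = uc j → i = j := by
      intro i j h; rw [hucdef] at h; dsimp only at h; split_ifs at h <;> omega
    have huc_lt : ∀ i, i < n - 1 → uc i < n := by
      intro i h; rw [hucdef]; dsimp only; split_ifs <;> omega
    have huec : ∀ i, i ≠ i1 → uc (ec i) = i := by
      intro i h; rw [hucdef, hecdef]; dsimp only; split_ifs <;> omega
    have heuc : ∀ i, ec (uc i) = i := by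
      intro i; rw [hucdef, hecdef]; dsimp only; split_ifs <;> omega
    have hec_lt : ∀ i, i < n → i ≠ i1 → ec i < n - 1 := by
      intro i h1 h2; rw [hecdef]; dsimp only; split_ifs <;> omega
    have hec_inj : ∀ i j, i ≠ i1 → j ≠ i1 → ec i = ec j → i = j := by
      intro i j h1 h2 h; rw [hecdef] at h; dsimp only at h; split_ifs at h <;> omega
    have hp0cell : p0 ∈ cellFinset n b := mem_cellFinset.2 ⟨hi1lt, hc1, le_of_eq hbi1.symm⟩
    have hlevp0 : levelOf m p0.2 = t0 := ht0def.symm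
    have hcells' : cellFinset n b' = (cellFinset n b).erase p0 := by
      ext q
      rw [mem_cellFinset, Finset.mem_erase, mem_cellFinset]
      obtain ⟨a, y⟩ := q
      have hp0ne : ((a, y) ≠ p0) ↔ ¬(a = i1 ∧ y = c) := by
        rw [hp0def, Ne, Prod.mk.injEq]
      rw [hp0ne]
      rcases eq_or_ne a i1 with rfl | h
      · rw [hb'def]; simp only [Function.update_self]
        constructor
        · rintro ⟨h1, h2, h3⟩
          refine ⟨fun hc' => absurd hc'.2 (by omega), h1, h2, by rw [hbi1]; omega⟩
        · rintro ⟨hne, h1, h2, h3⟩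
          have hyc : ¬ y = c := fun hy => hne ⟨trivial, hy⟩
          rw [hbi1] at h3
          exact ⟨h1, h2, by omega⟩
      · rw [hb'def]; simp only [Function.update_of_ne h]
        tauto
    have hcell'' : ∀ q : ℕ × ℕ,
        q ∈ cellFinset (n - 1) b'' ↔ q.1 < n - 1 ∧ 1 ≤ q.2 ∧ q.2 ≤ b (uc q.1) ∧ q.2 ≤ m * t0 := by
      intro q
      rw [mem_cellFinset, hb''def]
      dsimp only
      rw [le_min_iff]
    have hlev'' : ∀ q ∈ cellFinset (n - 1) b'', levelOf m q.2 < t0 := by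
      intro q hq
      rw [hcell''] at hq
      exact levelOf_lt_of_le hm hq.2.1 hq.2.2.2
    set eP : ℕ × ℕ → ℕ × ℕ := fun p => (ec p.1, p.2) with hePdef
    set uP : ℕ × ℕ → ℕ × ℕ := fun q => (uc q.1, q.2) with huPdef
    have hfwd : ∀ p ∈ cellFinset n b, p.1 ≠ i1 → levelOf m p.2 ≠ t0 →
        eP p ∈ cellFinset (n - 1) b'' := by
      intro p hp h1 h2
      rw [mem_cellFinset] at hp
      rw [hcell'']
      rw [hePdef]; dsimp only
      rw [huec _ h1]
      have hle : p.2 ≤ m * t0 :=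
        le_of_levelOf_ne hm hp.2.1 (le_trans (hp.2.2.trans (hble _ hp.1)) ht0.2) h2
      exact ⟨hec_lt _ hp.1 h1, hp.2.1, hp.2.2, hle⟩
    have hbwd : ∀ q ∈ cellFinset (n - 1) b'', uP q ∈ cellFinset n b := by
      intro q hq
      rw [hcell''] at hq
      rw [mem_cellFinset, huPdef]; dsimp only
      exact ⟨huc_lt _ hq.1, hq.2.1, hq.2.2.1⟩
    have huP_col : ∀ q : ℕ × ℕ, (uP q).1 ≠ i1 := fun q => huc_ne q.1
    have huP_inj : Function.Injective uP := by
      intro a bq h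
      rw [huPdef] at h; dsimp only at h
      rw [Prod.mk.injEq] at h
      exact Prod.ext (huc_inj _ _ h.1) h.2
    have heuP : ∀ q : ℕ × ℕ, eP (uP q) = q := by
      intro q
      rw [hePdef, huPdef]; dsimp only
      exact Prod.ext (heuc _) rfl
    have hueP : ∀ p : ℕ × ℕ, p.1 ≠ i1 → uP (eP p) = p := by
      intro p h
      rw [hePdef, huPdef]; dsimp only
      exact Prod.ext (huec _ h) rfl
    have hp0nimg : ∀ Q : Finset (ℕ × ℕ), p0 ∉ Q.image uP := by
      intro Q h
      obtain ⟨q, _, he⟩ := Finset.mem_image.1 h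
      exact huP_col q (by rw [he])
    -- rook number decomposition
    have hsplit : ∀ k, (mpl m n b k).card =
        ((mpl m n b k).filter fun P => p0 ∈ P).card + (mpl m n b' k).card := by
      intro k
      have h := Finset.card_filter_add_card_filter_not
        (s := mpl m n b k) (p := fun P => p0 ∈ P)
      have he : (mpl m n b k).filter (fun P => ¬ p0 ∈ P) = mpl m n b' k := by
        ext P
        rw [Finset.mem_filter, mem_mpl, mem_mpl, hcells', Finset.subset_erase]
        tauto
      rw [← h, he]
    have hbij : ∀ k, ((mpl m n b (k+1)).filter fun P => p0 ∈ P).card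
        = (mpl m (n-1) b'' k).card := by
      intro k
      refine Finset.card_bij' (fun P _ => (P.erase p0).image eP)
        (fun Q _ => insert p0 (Q.image uP)) ?_ ?_ ?_ ?_
      · intro P hP
        rw [Finset.mem_filter, mem_mpl] at hP
        obtain ⟨⟨hsub, hcard, hprop⟩, hp0P⟩ := hP
        have hcol : ∀ p ∈ P.erase p0, p.1 ≠ i1 ∧ levelOf m p.2 ≠ t0 := by
          intro p hp
          obtain ⟨hpne, hpP⟩ := Finset.mem_erase.1 hp
          have h2 := hprop p hpP p0 hp0P hpne
          exact ⟨h2.1, by rw [← hlevp0]; exact h2.2⟩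
        rw [mem_mpl]
        refine ⟨?_, ?_, ?_⟩
        · intro q hq
          obtain ⟨p, hp, rfl⟩ := Finset.mem_image.1 hq
          exact hfwd p (hsub (Finset.mem_of_mem_erase hp)) (hcol p hp).1 (hcol p hp).2
        · rw [Finset.card_image_of_injOn, Finset.card_erase_of_mem hp0P, hcard]
          · omega
          · intro p hp q hq he
            rw [Finset.mem_coe] at hp hq
            have he2 : ec p.1 = ec q.1 ∧ p.2 = q.2 := by
              rw [hePdef] at he; dsimp only at he; rw [Prod.mk.injEq] at he; exact he
            exact Prod.ext (hec_inj _ _ (hcol p hp).1 (hcol q hq).1 he2.1) he2.2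
        · intro a ha bq hb2 hne
          obtain ⟨p, hp, rfl⟩ := Finset.mem_image.1 ha
          obtain ⟨q, hq, rfl⟩ := Finset.mem_image.1 hb2
          have hpq : p ≠ q := fun h => hne (by rw [h])
          have h2 := hprop p (Finset.mem_of_mem_erase hp) q (Finset.mem_of_mem_erase hq) hpq
          constructor
          · rw [hePdef]; dsimp only
            exact fun hee => h2.1 (hec_inj _ _ (hcol p hp).1 (hcol q hq).1 hee)
          · rw [hePdef]; dsimp only
            exact h2.2
      · intro Q hQ
        rw [mem_mpl] at hQ
        obtain ⟨hsubQ, hcardQ, hpropQ⟩ := hQ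
        rw [Finset.mem_filter, mem_mpl]
        refine ⟨⟨?_, ?_, ?_⟩, Finset.mem_insert_self _ _⟩
        · intro a ha
          rcases Finset.mem_insert.1 ha with rfl | ha2
          · exact hp0cell
          · obtain ⟨q, hq, rfl⟩ := Finset.mem_image.1 ha2
            exact hbwd q (hsubQ hq)
        · rw [Finset.card_insert_of_notMem (hp0nimg Q),
            Finset.card_image_of_injOn (Function.Injective.injOn huP_inj), hcardQ]
        · intro a ha bq hb2 hne
          rcases Finset.mem_insert.1 ha with rfl | ha2 <;>
            rcases Finset.mem_insert.1 hb2 with rfl | hb3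
          · exact absurd rfl hne
          · obtain ⟨q, hq, rfl⟩ := Finset.mem_image.1 hb3
            refine ⟨fun h => huP_col q h.symm, ?_⟩
            rw [hlevp0]
            exact (hlev'' q (hsubQ hq)).ne'
          · obtain ⟨q, hq, rfl⟩ := Finset.mem_image.1 ha2
            refine ⟨fun h => huP_col q h, ?_⟩
            rw [hlevp0]
            exact (hlev'' q (hsubQ hq)).ne
          · obtain ⟨p, hp, rfl⟩ := Finset.mem_image.1 ha2
            obtain ⟨q, hq, rfl⟩ := Finset.mem_image.1 hb3
            have hpq : p ≠ q := fun h => hne (by rw [h])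
            have h2 := hpropQ p hp q hq hpq
            exact ⟨fun h => h2.1 (huc_inj _ _ h), h2.2⟩
      · intro P hP
        rw [Finset.mem_filter, mem_mpl] at hP
        obtain ⟨⟨hsub, hcard, hprop⟩, hp0P⟩ := hP
        rw [Finset.image_image]
        have himg : (P.erase p0).image (uP ∘ eP) = P.erase p0 := by
          rw [show (P.erase p0).image (uP ∘ eP) = (P.erase p0).image id from
            Finset.image_congr (fun p hp => by
              rw [Finset.mem_coe] at hp
              obtain ⟨hpne, hpP⟩ := Finset.mem_erase.1 hp
              exact hueP p (hprop p hpP p0 hp0P hpne).1), Finset.image_id]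
        rw [himg, Finset.insert_erase hp0P]
      · intro Q hQ
        rw [Finset.erase_insert (hp0nimg Q), Finset.image_image]
        rw [show Q.image (eP ∘ uP) = Q.image id from
          Finset.image_congr (fun q hq => heuP q), Finset.image_id]
    -- level number facts
    have hlevcell : ∀ p ∈ cellFinset n b, levelOf m p.2 ≤ t0 := by
      intro p hp
      rw [mem_cellFinset] at hp
      exact levelOf_mono (hp.2.2.trans (hble _ hp.1))
    have hlnB0 : ∀ j, 1 ≤ j → j < j0 → levelNum m n b j = 0 := by
      intro j h1 h2
      unfold levelNum
      rw [Finset.card_eq_zero, Finset.filter_eq_empty_iff]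
      intro p hp
      have h3 := hlevcell p hp
      omega
    have hlnB''0 : ∀ j, 1 ≤ j → j < j0 → levelNum m (n-1) b'' j = 0 := by
      intro j h1 h2
      unfold levelNum
      rw [Finset.card_eq_zero, Finset.filter_eq_empty_iff]
      intro p hp
      have h3 := hlev'' p hp
      omega
    have hln'_ne : ∀ j, 1 ≤ j → j ≤ n → j ≠ j0 → levelNum m n b' j = levelNum m n b j := by
      intro j h1 h2 h3
      unfold levelNum
      rw [hcells', Finset.filter_erase, Finset.erase_eq_of_notMem]
      intro hmem
      have h4 := (Finset.mem_filter.1 hmem).2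
      rw [hlevp0] at h4
      omega
    have hln'_j0 : levelNum m n b j0 = levelNum m n b' j0 + 1 := by
      unfold levelNum
      rw [hcells', Finset.filter_erase]
      have hp0mem : p0 ∈ (cellFinset n b).filter (fun p => levelOf m p.2 = n - j0) :=
        Finset.mem_filter.2 ⟨hp0cell, by rw [hlevp0]; omega⟩
      rw [Finset.card_erase_of_mem hp0mem]
      have h5 := Finset.card_pos.2 ⟨p0, hp0mem⟩
      omega
    have hln5 : ∀ j, j0 ≤ j → j ≤ n - 1 →
        levelNum m n b (j+1) = levelNum m (n-1) b'' j + m := by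
      intro j hj1 hj2
      have htt0 : n - (j+1) < t0 := by omega
      unfold levelNum
      rw [show (n-1) - j = n - (j+1) from by omega]
      set t := n - (j+1) with htdef
      have hA : ((cellFinset n b).filter (fun p => levelOf m p.2 = t)).filter
            (fun p => p.1 = i1)
          = (Finset.Icc (m*t+1) (m*t+m)).image (fun y => (i1, y)) := by
        ext q
        obtain ⟨a, y⟩ := q
        simp only [Finset.mem_filter, mem_cellFinset, Finset.mem_image, Finset.mem_Icc,
          Prod.mk.injEq]
        constructor
        · rintro ⟨⟨⟨h1, h2, h3⟩, h4⟩, h5⟩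
          exact ⟨y, (levelOf_eq_iff hm h2).1 h4, h5.symm, rfl⟩
        · rintro ⟨y', ⟨hy1, hy2⟩, he1, he2⟩
          have hmt : m * t + m ≤ m * t0 := by
            have h6 := Nat.mul_le_mul_left m (show t + 1 ≤ t0 by omega)
            rw [Nat.mul_succ] at h6
            omega
          subst he1
          subst he2
          refine ⟨⟨⟨hi1lt, by omega, ?_⟩, ?_⟩, rfl⟩
          · rw [hbi1]; omega
          · exact (levelOf_eq_iff hm (by omega)).2 ⟨by omega, by omega⟩
      have hAcard : (((cellFinset n b).filter (fun p => levelOf m p.2 = t)).filter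
          (fun p => p.1 = i1)).card = m := by
        have hinj : Function.Injective (fun y : ℕ => (i1, y)) := fun y z h => by
          simpa using congrArg Prod.snd h
        rw [hA, Finset.card_image_of_injective _ hinj, Nat.card_Icc]
        omega
      have hB : (((cellFinset n b).filter (fun p => levelOf m p.2 = t)).filter
            (fun p => ¬ p.1 = i1)).card
          = ((cellFinset (n-1) b'').filter (fun p => levelOf m p.2 = t)).card := by
        apply Finset.card_nbij (i := eP)
        · intro p hp
          simp only [Finset.mem_coe, Finset.mem_filter] at hp ⊢
          obtain ⟨⟨hc2, hl2⟩, hcol2⟩ := hp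
          exact ⟨hfwd p hc2 hcol2 (by omega), hl2⟩
        · intro p hp q hq he
          rw [Finset.mem_coe, Finset.mem_filter] at hp hq
          have he2 : ec p.1 = ec q.1 ∧ p.2 = q.2 := by
            rw [hePdef] at he; dsimp only at he; rw [Prod.mk.injEq] at he; exact he
          exact Prod.ext (hec_inj _ _ hp.2 hq.2 he2.1) he2.2
        · intro q hq
          rw [Finset.mem_coe, Finset.mem_filter] at hq
          refine ⟨uP q, ?_, heuP q⟩
          rw [Finset.mem_coe, Finset.mem_filter, Finset.mem_filter]
          exact ⟨⟨hbwd q hq.1, hq.2⟩, huP_col q⟩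
      have hsplit2 := Finset.card_filter_add_card_filter_not
        (s := (cellFinset n b).filter (fun p => levelOf m p.2 = t)) (p := fun p => p.1 = i1)
      omega
    -- hypotheses for the induction on b'
    have hCpos : 1 ≤ C := by
      rw [← hC]
      calc 1 ≤ b iw := by omega
        _ ≤ ∑ i ∈ Finset.range n, b i :=
          Finset.single_le_sum (fun i _ => Nat.zero_le _) (Finset.mem_range.2 hiwn)
    have hdiffsum : ∑ i ∈ Finset.range n \ {i1}, b i + c = C := by
      have h2 := (Finset.sum_eq_sum_sdiff_singleton_add (Finset.mem_range.2 hi1lt) b).symm.trans hC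
      rw [hbi1] at h2
      exact h2
    have hsum' : ∑ i ∈ Finset.range n, b' i = C - 1 := by
      rw [hb'def, Finset.sum_update_of_mem (Finset.mem_range.2 hi1lt)]
      omega
    have hb'm : FerrersMono n b' := by
      intro i hi
      rw [hb'def]
      simp only [Function.update_apply]
      have h7 := hb i hi
      split_ifs with h5 h6
      · omega
      · subst h5
        rw [hbi1] at h7
        omega
      · have h8 := hltc i (by omega)
        omega
      · exact h7
    have hbd' : ∀ i, i < n → b' i ≤ m * n := by
      intro i hi
      rw [hb'def]
      simp only [Function.update_apply]
      split_ifs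
      · omega
      · exact hbd i hi
    have IH' := IH (C-1) (by omega) n b' hsum' hb'm hbd' x
    -- hypotheses for the induction on b''
    have hb''m : FerrersMono (n-1) b'' := by
      intro i hi
      rw [hb''def]
      dsimp only
      have h5 : uc i ≤ uc (i+1) := by rw [hucdef]; dsimp only; split_ifs <;> omega
      have h6 : uc (i+1) < n := huc_lt _ (by omega)
      exact min_le_min (ferrers_mono hb h5 h6) le_rfl
    have hbd'' : ∀ i, i < n - 1 → b'' i ≤ m * (n-1) := by
      intro i hi
      rw [hb''def]
      dsimp only
      exact le_trans (min_le_right _ _) (Nat.mul_le_mul_left m (by omega))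
    have hsum'' : ∑ i ∈ Finset.range (n-1), b'' i < C := by
      have h1 : ∑ i ∈ Finset.range (n-1), b'' i ≤ ∑ i ∈ Finset.range (n-1), b (uc i) := by
        apply Finset.sum_le_sum
        intro i _
        rw [hb''def]
        exact min_le_left _ _
      have h2 : ∑ i ∈ Finset.range (n-1), b (uc i)
          = ∑ j ∈ (Finset.range (n-1)).image uc, b j :=
        (Finset.sum_image (fun i _ j _ h => huc_inj i j h)).symm
      have h3 : (Finset.range (n-1)).image uc ⊆ Finset.range n \ {i1} := by
        intro j hj
        obtain ⟨i, hi, rfl⟩ := Finset.mem_image.1 hj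
        rw [Finset.mem_range] at hi
        rw [Finset.mem_sdiff, Finset.mem_range, Finset.mem_singleton]
        exact ⟨huc_lt _ hi, huc_ne _⟩
      have h4 := Finset.sum_le_sum_of_subset (f := b) h3
      omega
    have IH'' := IH (∑ i ∈ Finset.range (n-1), b'' i) hsum'' (n-1) b'' rfl hb''m hbd'' x
    -- assemble the sums
    have hsum_split : ∑ k ∈ Finset.range (n+1), (mLevelRookNum m n b k : ℝ) * mfall x m (n-k)
        = (∑ k ∈ Finset.range (n+1),
            ((((mpl m n b k).filter fun P => p0 ∈ P).card : ℝ) * mfall x m (n-k)))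
          + ∑ k ∈ Finset.range (n+1), (mLevelRookNum m n b' k : ℝ) * mfall x m (n-k) := by
      rw [← Finset.sum_add_distrib]
      apply Finset.sum_congr rfl
      intro k _
      simp only [rook_eq_card]
      rw [hsplit k]
      push_cast
      ring
    have hs0 : ((mpl m n b 0).filter fun P => p0 ∈ P) = ∅ := by
      rw [Finset.filter_eq_empty_iff]
      intro P hP
      rw [mem_mpl] at hP
      have hPe : P = ∅ := Finset.card_eq_zero.1 hP.2.1
      rw [hPe]
      exact Finset.notMem_empty _
    have hsum_s : ∑ k ∈ Finset.range (n+1),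
          ((((mpl m n b k).filter fun P => p0 ∈ P).card : ℝ) * mfall x m (n-k))
        = ∑ k ∈ Finset.range ((n-1)+1),
            (mLevelRookNum m (n-1) b'' k : ℝ) * mfall x m ((n-1)-k) := by
      rw [Finset.sum_range_succ'
        (fun k => ((((mpl m n b k).filter fun P => p0 ∈ P).card : ℝ) * mfall x m (n-k))) n]
      simp only [hs0, Finset.card_empty, Nat.cast_zero, zero_mul, add_zero]
      have hrange : Finset.range ((n-1)+1) = Finset.range n := by congr 1; omega
      rw [hrange]
      apply Finset.sum_congr rfl
      intro k hk
      rw [hbij k, ← rook_eq_card, show n - (k+1) = (n-1) - k from by omega]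
    -- product decompositions
    have hsplit3 : ∀ g : ℕ → ℝ, ∏ j ∈ Finset.Icc 1 n, g j
        = (∏ j ∈ Finset.Ioc 0 (j0-1), g j) * g j0 * ∏ j ∈ Finset.Ioc j0 n, g j := by
      intro g
      have hsingle : Finset.Ioc (j0-1) j0 = {j0} := by
        ext a
        simp only [Finset.mem_Ioc, Finset.mem_singleton]
        omega
      rw [show Finset.Icc 1 n = Finset.Ioc 0 n from rfl,
        ← Finset.prod_Ioc_consecutive g (Nat.zero_le j0) hj0n,
        ← Finset.prod_Ioc_consecutive g (Nat.zero_le (j0-1)) (show j0-1 ≤ j0 by omega),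
        hsingle, Finset.prod_singleton]
    have hsplit4 : ∀ g : ℕ → ℝ, ∏ j ∈ Finset.Icc 1 (n-1), g j
        = (∏ j ∈ Finset.Ioc 0 (j0-1), g j) * ∏ j ∈ Finset.Ioc (j0-1) (n-1), g j := by
      intro g
      rw [show Finset.Icc 1 (n-1) = Finset.Ioc 0 (n-1) from rfl,
        ← Finset.prod_Ioc_consecutive g (Nat.zero_le (j0-1)) (show j0-1 ≤ n-1 by omega)]
    have hA' : ∏ j ∈ Finset.Ioc 0 (j0-1),
          (x + (levelNum m n b' j : ℝ) - (m : ℝ) * ((j : ℝ) - 1))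
        = ∏ j ∈ Finset.Ioc 0 (j0-1), (x + (levelNum m n b j : ℝ) - (m : ℝ) * ((j : ℝ) - 1)) := by
      apply Finset.prod_congr rfl
      intro j hj
      rw [Finset.mem_Ioc] at hj
      rw [hln'_ne j (by omega) (by omega) (by omega)]
    have hB' : ∏ j ∈ Finset.Ioc j0 n,
          (x + (levelNum m n b' j : ℝ) - (m : ℝ) * ((j : ℝ) - 1))
        = ∏ j ∈ Finset.Ioc j0 n, (x + (levelNum m n b j : ℝ) - (m : ℝ) * ((j : ℝ) - 1)) := by
      apply Finset.prod_congr rfl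
      intro j hj
      rw [Finset.mem_Ioc] at hj
      rw [hln'_ne j (by omega) (by omega) (by omega)]
    have hA'' : ∏ j ∈ Finset.Ioc 0 (j0-1),
          (x + (levelNum m (n-1) b'' j : ℝ) - (m : ℝ) * ((j : ℝ) - 1))
        = ∏ j ∈ Finset.Ioc 0 (j0-1), (x + (levelNum m n b j : ℝ) - (m : ℝ) * ((j : ℝ) - 1)) := by
      apply Finset.prod_congr rfl
      intro j hj
      rw [Finset.mem_Ioc] at hj
      rw [hlnB0 j (by omega) (by omega), hlnB''0 j (by omega) (by omega)]
    have hre : ∏ j ∈ Finset.Ioc (j0-1) (n-1),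
          (x + (levelNum m (n-1) b'' j : ℝ) - (m : ℝ) * ((j : ℝ) - 1))
        = ∏ j ∈ Finset.Ioc j0 n, (x + (levelNum m n b j : ℝ) - (m : ℝ) * ((j : ℝ) - 1)) := by
      have hmap : Finset.Ioc j0 n = (Finset.Ioc (j0-1) (n-1)).map (addRightEmbedding 1) := by
        rw [Finset.map_add_right_Ioc]
        congr 1 <;> omega
      rw [hmap, Finset.prod_map]
      apply Finset.prod_congr rfl
      intro j hj
      rw [Finset.mem_Ioc] at hj
      have h5 := hln5 j (by omega) hj.2
      simp only [addRightEmbedding_apply]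
      rw [h5]
      push_cast
      ring
    have hFj0 : x + (levelNum m n b j0 : ℝ) - (m : ℝ) * ((j0 : ℝ) - 1)
        = (x + (levelNum m n b' j0 : ℝ) - (m : ℝ) * ((j0 : ℝ) - 1)) + 1 := by
      rw [hln'_j0]
      push_cast
      ring
    rw [hsum_split, hsum_s, IH', IH'',
      hsplit3 (fun j => x + (levelNum m n b j : ℝ) - (m : ℝ) * ((j : ℝ) - 1)),
      hsplit3 (fun j => x + (levelNum m n b' j : ℝ) - (m : ℝ) * ((j : ℝ) - 1)),
      hsplit4 (fun j => x + (levelNum m (n-1) b'' j : ℝ) - (m : ℝ) * ((j : ℝ) - 1))]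
    rw [hA', hB', hA'', hre, hFj0]
    ring

end S3Aux

/-- level-number factorization.  For a Ferrers board
`B = (b_1, …, b_n)` contained in the first `n` levels,
`p_m(B,x) = ∏_{j=1}^n (x + l_j - m(j-1))` where `l_j` is the `j`-th level number. -/
theorem statement3 (m : ℕ) (hm : 0 < m) (n : ℕ) (b : ℕ → ℕ)
    (hb : FerrersMono n b) (hbd : ∀ i, i < n → b i ≤ m * n) (x : ℝ) :
    ∑ k ∈ Finset.range (n + 1), (mLevelRookNum m n b k : ℝ) * mfall x m (n - k) =
      ∏ j ∈ Finset.Icc 1 n, (x + (levelNum m n b j : ℝ) - (m : ℝ) * ((j : ℝ) - 1)) :=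
  S3Aux.key m hm (∑ i ∈ Finset.range n, b i) n b rfl hb hbd x
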